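/- arXiv:2511.08440 — 3 statements merged into one kernel-verified Lean document; each statement's English description precedes it below -/
import Mathlib

section
/- Let F be a differentiable strictly convex function on an open convex set Ω ⊆ ℝ^d whose gradient map ∇F : Ω → ∇F(Ω) is a bijection. Let q_1,…,q_p ∈ Ω and λ ∈ Δ_p. Then the point p* = (∇F)⁻¹(∑_k λ_k ∇F(q_k)), if it lies in Ω, is the unique minimizer over Ω of the function p ↦ ∑_k λ_k B_F(p ‖ q_k). -/
open scoped InnerProductSpace BigOperators

noncomputable def breg {d : ℕ} (F : EuclideanSpace ℝ (Fin d) → ℝ)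
    (g : EuclideanSpace ℝ (Fin d) → EuclideanSpace ℝ (Fin d))
    (p q : EuclideanSpace ℝ (Fin d)) : ℝ :=
  F p - F q - ⟪g q, p - q⟫_ℝ

/-- First-order strict convexity inequality. -/
lemma grad_strict_aux {d : ℕ} {Ω : Set (EuclideanSpace ℝ (Fin d))}
    (hΩc : Convex ℝ Ω) {F : EuclideanSpace ℝ (Fin d) → ℝ}
    {gx x y : EuclideanSpace ℝ (Fin d)}
    (hgx : HasGradientAt F gx x)
    (hstrict : StrictConvexOn ℝ Ω F)
    (hx : x ∈ Ω) (hy : y ∈ Ω) (hne : x ≠ y) :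
    F x + ⟪gx, y - x⟫_ℝ < F y := by
  set v := y - x with hv
  set φ : ℝ → ℝ := fun t => F (x + t • v) with hφ
  -- φ is convex on the preimage set
  have hA : ∀ t : ℝ, (AffineMap.lineMap x y : ℝ →ᵃ[ℝ] _) t = x + t • v := by
    intro t
    simp [AffineMap.lineMap_apply, hv]
    abel
  have hconv : ConvexOn ℝ ((AffineMap.lineMap x y : ℝ →ᵃ[ℝ] _) ⁻¹' Ω) φ := by
    have h := (hstrict.convexOn).comp_affineMap (AffineMap.lineMap x y : ℝ →ᵃ[ℝ] _)
    have : φ = F ∘ (AffineMap.lineMap x y : ℝ →ᵃ[ℝ] _) := by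
      funext t; simp [hφ, hA t]
    rw [this]; exact h
  have h0 : (0 : ℝ) ∈ (AffineMap.lineMap x y : ℝ →ᵃ[ℝ] _) ⁻¹' Ω := by
    simp [Set.mem_preimage, hA 0, hx]
  have hz : x + (1/2 : ℝ) • v = (1/2 : ℝ) • x + (1/2 : ℝ) • y := by
    rw [hv, smul_sub]
    module
  have hhalf : (1/2 : ℝ) ∈ (AffineMap.lineMap x y : ℝ →ᵃ[ℝ] _) ⁻¹' Ω := by
    simp only [Set.mem_preimage, hA (1/2 : ℝ), hz]
    exact hΩc hx hy (by norm_num) (by norm_num) (by norm_num)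
  -- φ has derivative ⟪gx, v⟫ at 0
  have hc : HasDerivAt (fun t : ℝ => x + t • v) v 0 := by
    simpa using ((hasDerivAt_id (0 : ℝ)).smul_const v).const_add x
  have hder : HasDerivAt φ ⟪gx, v⟫_ℝ 0 := by
    have hgx' : HasFDerivAt F ((InnerProductSpace.toDual ℝ _) gx) (x + (0:ℝ) • v) := by
      simpa using hgx.hasFDerivAt
    have := hgx'.comp_hasDerivAt 0 hc
    simp only [InnerProductSpace.toDual_apply_apply] at this
    exact this
  have hslope := hconv.le_slope_of_hasDerivAt h0 hhalf (by norm_num) hder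
  have hφ0 : φ 0 = F x := by simp [hφ]
  have hφh : φ (1/2 : ℝ) = F ((1/2 : ℝ) • x + (1/2 : ℝ) • y) := by
    show F (x + (1/2 : ℝ) • v) = _
    rw [hz]
  have hslope' : slope φ 0 (1/2 : ℝ) = 2 * (F ((1/2 : ℝ) • x + (1/2 : ℝ) • y) - F x) := by
    rw [slope_def_field]; rw [hφ0, hφh]; ring
  have hstrictmid : F ((1/2 : ℝ) • x + (1/2 : ℝ) • y) < (1/2 : ℝ) * F x + (1/2 : ℝ) * F y := by
    have := hstrict.2 hx hy hne (by norm_num : (0:ℝ) < 1/2) (by norm_num : (0:ℝ) < 1/2)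
      (by norm_num)
    simpa [smul_eq_mul] using this
  have : ⟪gx, v⟫_ℝ ≤ 2 * (F ((1/2 : ℝ) • x + (1/2 : ℝ) • y) - F x) := by
    rw [← hslope']; exact hslope
  nlinarith [this, hstrictmid]

/-- the right Bregman centroid `p*`, characterized by
`∇F(p*) = ∑ λ_k ∇F(q_k)`, is the unique minimizer over `Ω` of
`p ↦ ∑ λ_k B_F(p ‖ q_k)`. -/
theorem stmt1 {d m : ℕ} (Ω : Set (EuclideanSpace ℝ (Fin d)))
    (hΩo : IsOpen Ω) (hΩc : Convex ℝ Ω)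
    (F : EuclideanSpace ℝ (Fin d) → ℝ)
    (g : EuclideanSpace ℝ (Fin d) → EuclideanSpace ℝ (Fin d))
    (hg : ∀ x ∈ Ω, HasGradientAt F (g x) x)
    (hstrict : StrictConvexOn ℝ Ω F)
    (hbij : Set.InjOn g Ω)
    (lam : Fin m → ℝ) (hlam : ∀ k, 0 ≤ lam k) (hsum : ∑ k, lam k = 1)
    (q : Fin m → EuclideanSpace ℝ (Fin d)) (hq : ∀ k, q k ∈ Ω)
    (pstar : EuclideanSpace ℝ (Fin d)) (hpstar : pstar ∈ Ω)
    (hcent : g pstar = ∑ k, lam k • g (q k)) :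
    (∀ p ∈ Ω, ∑ k, lam k * breg F g pstar (q k) ≤ ∑ k, lam k * breg F g p (q k)) ∧
    (∀ p ∈ Ω,
      (∑ k, lam k * breg F g p (q k)) = (∑ k, lam k * breg F g pstar (q k)) →
      p = pstar) := by
  -- key identity : S p = S pstar + breg F g p pstar
  have key : ∀ p, (∑ k, lam k * breg F g p (q k))
      = (∑ k, lam k * breg F g pstar (q k)) + breg F g p pstar := by
    intro p
    have hBp : breg F g p pstar
        = F p - F pstar - ∑ k, lam k * ⟪g (q k), p - pstar⟫_ℝ := by
      simp [breg, hcent, sum_inner, real_inner_smul_left, PiLp.inner_apply,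
        Finset.mul_sum, mul_assoc]
      exact Finset.sum_congr rfl fun _ _ => Finset.sum_congr rfl fun _ _ => by ring
    have hsplit : ∀ k, ⟪g (q k), p - q k⟫_ℝ
        = ⟪g (q k), p - pstar⟫_ℝ + ⟪g (q k), pstar - q k⟫_ℝ := by
      intro k
      rw [← inner_add_right]
      congr 1
      abel
    have expand : ∀ r, (∑ k, lam k * breg F g r (q k))
        = F r - (∑ k, lam k * F (q k)) - (∑ k, lam k * ⟪g (q k), r - q k⟫_ℝ) := by
      intro r
      simp only [breg, mul_sub]
      rw [Finset.sum_sub_distrib, Finset.sum_sub_distrib, ← Finset.sum_mul, hsum, one_mul]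
    rw [expand p, expand pstar, hBp]
    simp only [hsplit]
    rw [Finset.sum_congr rfl (fun k _ => mul_add (lam k) _ _), Finset.sum_add_distrib]
    ring
  have hnonneg : ∀ p ∈ Ω, p ≠ pstar → 0 < breg F g p pstar := by
    intro p hp hne
    have := grad_strict_aux hΩc (hg pstar hpstar) hstrict hpstar hp (Ne.symm hne)
    simp only [breg]
    linarith
  constructor
  · intro p hp
    rw [key p]
    rcases eq_or_ne p pstar with h | h
    · simp [h, breg]
    · linarith [hnonneg p hp h]
  · intro p hp heq
    by_contra h
    rw [key p] at heq
    have := hnonneg p hp h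
    linarith
end

section
/- Let C be a nonempty closed convex subset of ℝ^n, F a Legendre function whose domain interior contains C, π₀ in the interior of dom(F), and let π̂ be the Bregman projection of π₀ onto C, i.e. the minimizer of π ↦ B_F(π ‖ π₀) over C. Then for every π* ∈ C: B_F(π* ‖ π̂) ≤ B_F(π* ‖ π₀) − B_F(π̂ ‖ π₀). In particular B_F(π* ‖ π̂) ≤ B_F(π* ‖ π₀). -/
open scoped InnerProductSpace BigOperators

/-- generalized Pythagorean inequality for the Bregman projection
`π̂` of `π₀` onto a nonempty closed convex set `C`. -/
theorem stmt5 {d : ℕ} (C : Set (EuclideanSpace ℝ (Fin d)))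
    (hCne : C.Nonempty) (hCcl : IsClosed C) (hCco : Convex ℝ C)
    (Ω : Set (EuclideanSpace ℝ (Fin d))) (hΩo : IsOpen Ω) (hΩc : Convex ℝ Ω)
    (hCΩ : C ⊆ Ω)
    (F : EuclideanSpace ℝ (Fin d) → ℝ)
    (g : EuclideanSpace ℝ (Fin d) → EuclideanSpace ℝ (Fin d))
    (hstrict : StrictConvexOn ℝ Ω F)
    (hg : ∀ x ∈ Ω, HasGradientAt F (g x) x)
    (π₀ : EuclideanSpace ℝ (Fin d)) (hπ₀ : π₀ ∈ Ω)
    (πh : EuclideanSpace ℝ (Fin d)) (hπh : πh ∈ C)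
    (hmin : ∀ π ∈ C, breg F g πh π₀ ≤ breg F g π π₀) :
    ∀ πs ∈ C, breg F g πs πh ≤ breg F g πs π₀ - breg F g πh π₀ := by
  intro πs hπs
  -- the objective function
  set f : EuclideanSpace ℝ (Fin d) → ℝ := fun π => breg F g π π₀ with hf
  -- derivative of f at πh within C, direction πs - πh
  have hFd : HasFDerivAt F (InnerProductSpace.toDual ℝ _ (g πh)) πh :=
    (hasGradientAt_iff_hasFDerivAt.mp (hg πh (hCΩ hπh)))
  have hfd : HasFDerivAt f
      (InnerProductSpace.toDual ℝ _ (g πh) - innerSL ℝ (g π₀)) πh := by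
    have h1 : HasFDerivAt (fun π : EuclideanSpace ℝ (Fin d) => ⟪g π₀, π - π₀⟫_ℝ)
        (innerSL ℝ (g π₀)) πh := by
      have := ((innerSL ℝ (g π₀)).hasFDerivAt (x := πh - π₀)).comp πh
        ((hasFDerivAt_id πh).sub_const π₀)
      simpa [Function.comp_def] using this
    have h2 := (hFd.sub_const (F π₀)).sub h1
    exact h2
  have hymem : πs - πh ∈ posTangentConeAt C πh :=
    sub_mem_posTangentConeAt_of_segment_subset (hCco.segment_subset hπh hπs)
  have hminOn : IsLocalMinOn f C πh := by
    apply IsMinOn.localize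
    intro π hπ
    exact hmin π hπ
  have key : (0 : ℝ) ≤ ⟪g πh, πs - πh⟫_ℝ - ⟪g π₀, πs - πh⟫_ℝ := by
    have := hminOn.hasFDerivWithinAt_nonneg hfd.hasFDerivWithinAt hymem
    simpa using this
  -- algebra
  simp only [breg]
  have e1 : ⟪g π₀, πs - π₀⟫_ℝ = ⟪g π₀, πs - πh⟫_ℝ + ⟪g π₀, πh - π₀⟫_ℝ := by
    rw [← inner_add_right, sub_add_sub_cancel]
  linarith [key, e1]
end

section
/- Let X be a finite set with probability distribution P having full support, let Φ : X → X be an involution, and let F : ℝ^d → ℝ be differentiable, convex, and μ-strongly convex with respect to a norm ‖·‖. Let π₀ : X → ℝ^d be any map and let π̂ : X → ℝ^d satisfy π̂(x) = π̂(Φ(x)) for all x (coherence). Then E_{x∼P}[B_F(π̂(x) ‖ π₀(x))] ≥ (μ/2)·E_{x∼P}[λ(x)(1−λ(x))·‖π₀(x) − π₀(Φ(x))‖²], where λ(x) = P(x)/(P(x)+P(Φ(x))). -/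
open scoped InnerProductSpace BigOperators

/-- for a coherent `π̂` and a `μ`-strongly convex generator `F`
(with respect to a (semi)norm `N`), the expected divergence to the baseline is
lower-bounded by the baseline's incoherence. -/
theorem stmt7 {d : ℕ} {X : Type*} [Fintype X]
    (P : X → ℝ) (hP : ∀ x, 0 < P x) (hP1 : ∑ x, P x = 1)
    (Φ : X → X) (hΦ : ∀ x, Φ (Φ x) = x)
    (F : EuclideanSpace ℝ (Fin d) → ℝ)
    (g : EuclideanSpace ℝ (Fin d) → EuclideanSpace ℝ (Fin d))
    (hg : ∀ x, HasGradientAt F (g x) x)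
    (hconv : ConvexOn ℝ Set.univ F)
    (N : Seminorm ℝ (EuclideanSpace ℝ (Fin d)))
    (μ : ℝ) (hμ : 0 < μ)
    (hsc : ∀ p q, μ / 2 * (N (p - q))^2 ≤ breg F g p q)
    (π₀ πh : X → EuclideanSpace ℝ (Fin d))
    (hcoh : ∀ x, πh x = πh (Φ x)) :
    μ / 2 * ∑ x, P x * ((P x / (P x + P (Φ x))) * (1 - P x / (P x + P (Φ x)))
        * (N (π₀ x - π₀ (Φ x)))^2)
      ≤ ∑ x, P x * breg F g (πh x) (π₀ x) := by
  set G : X → ℝ := fun x => P x * ((P x / (P x + P (Φ x))) * (1 - P x / (P x + P (Φ x)))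
        * (N (π₀ x - π₀ (Φ x)))^2) with hG
  set f : X → ℝ := fun x => P x * (N (πh x - π₀ x))^2 with hf
  have key : ∀ x : X, G x + G (Φ x) ≤ f x + f (Φ x) := by
    intro x
    have hinv := hΦ x
    have ha := hP x; have hb := hP (Φ x)
    have hr : πh (Φ x) = πh x := (hcoh x).symm
    simp only [hG, hf, hinv, hr]
    set a := P x
    set b := P (Φ x)
    set p := π₀ x
    set q := π₀ (Φ x)
    set r := πh x
    set u := N (r - p) with hu'
    set v := N (r - q) with hv'
    set n := N (p - q) with hn'
    have hu : (0:ℝ) ≤ u := apply_nonneg N _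
    have hv : (0:ℝ) ≤ v := apply_nonneg N _
    have hn : (0:ℝ) ≤ n := apply_nonneg N _
    have htri : n ≤ v + u := by
      have h1 : p - q = (r - q) - (r - p) := by abel
      rw [hn', h1]
      exact map_sub_le_add N _ _
    have hqp : N (q - p) = n := by
      rw [hn', ← neg_sub p q, map_neg_eq_map]
    have hab : (0:ℝ) < a + b := by positivity
    rw [hqp]
    have hlam1 : 1 - a / (a + b) = b / (a + b) := by field_simp; ring
    have hlam2 : 1 - b / (a + b) = a / (a + b) := by field_simp; ring
    rw [hlam1]
    have hba : b + a = a + b := by ring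
    rw [hba, hlam2]
    have hLHS : a * (a / (a + b) * (b / (a + b)) * n ^ 2)
        + b * (b / (a + b) * (a / (a + b)) * n ^ 2) = a * b / (a + b) * n ^ 2 := by
      field_simp
    rw [hLHS, div_mul_eq_mul_div, div_le_iff₀ hab]
    have hn2 : n ^ 2 ≤ (v + u) ^ 2 := by nlinarith
    have hstep : a * b * n ^ 2 ≤ a * b * (v + u) ^ 2 :=
      mul_le_mul_of_nonneg_left hn2 (mul_pos ha hb).le
    nlinarith [sq_nonneg (a * u - b * v), hstep, mul_pos ha hb]
  have hsum1 : ∑ x, P x * (μ / 2 * (N (πh x - π₀ x))^2) ≤ ∑ x, P x * breg F g (πh x) (π₀ x) :=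
    Finset.sum_le_sum fun x _ => mul_le_mul_of_nonneg_left (hsc _ _) (hP x).le
  refine le_trans ?_ hsum1
  have hrw : ∑ x, P x * (μ / 2 * (N (πh x - π₀ x))^2) = μ / 2 * ∑ x, f x := by
    rw [Finset.mul_sum]; exact Finset.sum_congr rfl fun x _ => by simp [hf]; ring
  rw [hrw]
  have hμ2 : (0:ℝ) ≤ μ / 2 := by positivity
  refine mul_le_mul_of_nonneg_left ?_ hμ2
  have e : Equiv.Perm X := Function.Involutive.toPerm Φ hΦ
  have hcomp : ∀ (h : X → ℝ), ∑ x, h (Φ x) = ∑ x, h x := fun h =>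
    Equiv.sum_comp (Function.Involutive.toPerm Φ hΦ) h
  have h2 : 2 * ∑ x, G x ≤ 2 * ∑ x, f x := by
    calc 2 * ∑ x, G x = ∑ x, (G x + G (Φ x)) := by
          rw [Finset.sum_add_distrib, hcomp G]; ring
      _ ≤ ∑ x, (f x + f (Φ x)) := Finset.sum_le_sum fun x _ => key x
      _ = 2 * ∑ x, f x := by rw [Finset.sum_add_distrib, hcomp f]; ring
  linarith
end
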